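/- Let W be a nonzero minimal closed max cone in (ℝ≥0)ⁿ invariant under max-times multiplication by A ∈ (ℝ≥0)^{n×n}, with A^{⊗t} ⊗ v ≠ 0 for every nonzero v ∈ W and t ≥ 1. Then [v : A^{⊗t} ⊗ v] = [v : A ⊗ v]^t for every nonzero v ∈ W and every t ≥ 1. -/

import Mathlib

open scoped NNReal

set_option synthInstance.maxHeartbeats 1000000
set_option maxHeartbeats 1000000

def MaxCone {n : ℕ} (W : Set (Fin n → ℝ≥0)) : Prop :=
  (0 : Fin n → ℝ≥0) ∈ W ∧
  (∀ x ∈ W, ∀ y ∈ W, x ⊔ y ∈ W) ∧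
  (∀ r : ℝ≥0, ∀ x ∈ W, r • x ∈ W)

def maxMul {n : ℕ} (A : Matrix (Fin n) (Fin n) ℝ≥0) (v : Fin n → ℝ≥0) : Fin n → ℝ≥0 :=
  fun i => Finset.univ.sup fun j => A i j * v j

def maxMatMul {n : ℕ} (A B : Matrix (Fin n) (Fin n) ℝ≥0) : Matrix (Fin n) (Fin n) ℝ≥0 :=
  fun i j => Finset.univ.sup fun k => A i k * B k j

def maxPow {n : ℕ} (A : Matrix (Fin n) (Fin n) ℝ≥0) : ℕ → Matrix (Fin n) (Fin n) ℝ≥0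
  | 0 => 1
  | (t + 1) => maxMatMul A (maxPow A t)

noncomputable def bracket {n : ℕ} (v w : Fin n → ℝ≥0) : ℝ≥0 :=
  sSup {l : ℝ≥0 | l • w ≤ v}

section Aux

variable {n : ℕ} (A B : Matrix (Fin n) (Fin n) ℝ≥0)

lemma maxMul_zero : maxMul A 0 = 0 := by
  funext i
  simp [maxMul]

lemma maxMul_mono {x y : Fin n → ℝ≥0} (h : x ≤ y) : maxMul A x ≤ maxMul A y := by
  intro i
  exact Finset.sup_mono_fun fun j _ => mul_le_mul_of_nonneg_left (h j) zero_le

lemma maxMul_smul (r : ℝ≥0) (x : Fin n → ℝ≥0) : maxMul A (r • x) = r • maxMul A x := by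
  funext i
  simp only [maxMul, Pi.smul_apply, smul_eq_mul, NNReal.mul_finset_sup]
  congr 1; funext j; ring

lemma maxMul_supv (x y : Fin n → ℝ≥0) : maxMul A (x ⊔ y) = maxMul A x ⊔ maxMul A y := by
  funext i
  simp only [maxMul, Pi.sup_apply]
  rw [← Finset.sup_sup]
  congr 1; funext j
  simp only [Pi.sup_apply]
  rcases le_total (x j) (y j) with h | h
  · rw [max_eq_right h, max_eq_right (mul_le_mul_of_nonneg_left h zero_le)]
  · rw [max_eq_left h, max_eq_left (mul_le_mul_of_nonneg_left h zero_le)]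

lemma maxMul_one (v : Fin n → ℝ≥0) : maxMul 1 v = v := by
  funext i
  apply le_antisymm
  · apply Finset.sup_le
    intro j _
    rcases eq_or_ne i j with rfl | h
    · simp [Matrix.one_apply_eq]
    · simp [Matrix.one_apply_ne h]
  · calc v i = (1 : Matrix (Fin n) (Fin n) ℝ≥0) i i * v i := by simp [Matrix.one_apply_eq]
    _ ≤ _ := Finset.le_sup (f := fun j => (1 : Matrix (Fin n) (Fin n) ℝ≥0) i j * v j)
      (Finset.mem_univ i)

lemma maxMul_matmul (v : Fin n → ℝ≥0) :
    maxMul (maxMatMul A B) v = maxMul A (maxMul B v) := by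
  funext i
  simp only [maxMul, maxMatMul, NNReal.mul_finset_sup]
  apply le_antisymm
  · apply Finset.sup_le; intro j _
    rw [NNReal.finset_sup_mul]
    apply Finset.sup_le; intro k _
    calc A i k * B k j * v j = A i k * (B k j * v j) := by ring
    _ ≤ Finset.univ.sup fun a => A i k * (B k a * v a) :=
        Finset.le_sup (f := fun a => A i k * (B k a * v a)) (Finset.mem_univ j)
    _ ≤ _ := Finset.le_sup (f := fun k => Finset.univ.sup fun a => A i k * (B k a * v a))
        (Finset.mem_univ k)
  · apply Finset.sup_le; intro k _
    apply Finset.sup_le; intro j _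
    calc A i k * (B k j * v j) = A i k * B k j * v j := by ring
    _ ≤ (Finset.univ.sup fun a => A i a * B a j) * v j :=
        mul_le_mul_of_nonneg_right (Finset.le_sup (f := fun a => A i a * B a j) (Finset.mem_univ k)) zero_le
    _ ≤ _ := Finset.le_sup (f := fun j => (Finset.univ.sup fun a => A i a * B a j) * v j)
        (Finset.mem_univ j)

lemma maxMul_maxPow (t : ℕ) (v : Fin n → ℝ≥0) :
    maxMul (maxPow A t) v = (maxMul A)^[t] v := by
  induction t with
  | zero => simp [maxPow, maxMul_one]
  | succ t ih => rw [maxPow, maxMul_matmul, ih, Function.iterate_succ_apply']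

lemma smul_supv (r : ℝ≥0) (x y : Fin n → ℝ≥0) : r • (x ⊔ y) = r • x ⊔ r • y := by
  funext i
  simp only [Pi.smul_apply, Pi.sup_apply, smul_eq_mul]
  rcases le_total (x i) (y i) with h | h
  · rw [max_eq_right h, max_eq_right (mul_le_mul_of_nonneg_left h zero_le)]
  · rw [max_eq_left h, max_eq_left (mul_le_mul_of_nonneg_left h zero_le)]

lemma smul_le_smul_vec (r : ℝ≥0) {x y : Fin n → ℝ≥0} (h : x ≤ y) : r • x ≤ r • y := by
  intro i
  exact mul_le_mul_of_nonneg_left (h i) zero_le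

lemma maxMul_finsetSup {ι : Type*} (s : Finset ι) (g : ι → Fin n → ℝ≥0) :
    maxMul A (s.sup g) = s.sup fun a => maxMul A (g a) := by
  induction s using Finset.cons_induction with
  | empty => rw [Finset.sup_empty, Finset.sup_empty]; exact maxMul_zero A
  | cons a s ha ih => rw [Finset.sup_cons, Finset.sup_cons, maxMul_supv, ih]

lemma smul_finsetSup {ι : Type*} (r : ℝ≥0) (s : Finset ι) (g : ι → Fin n → ℝ≥0) :
    r • s.sup g = s.sup fun a => r • g a := by
  induction s using Finset.cons_induction with
  | empty =>
    funext i
    simp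
  | cons a s ha ih => rw [Finset.sup_cons, Finset.sup_cons, smul_supv, ih]

lemma maxMul_continuous_apply (i : Fin n) :
    Continuous fun x : Fin n → ℝ≥0 => maxMul A x i := by
  have : ∀ s : Finset (Fin n), Continuous fun x : Fin n → ℝ≥0 => s.sup fun j => A i j * x j := by
    intro s
    induction s using Finset.cons_induction with
    | empty => simpa using continuous_const
    | cons a s ha ih =>
      simp only [Finset.sup_cons]
      exact (continuous_const.mul (continuous_apply a)).sup ih
  exact this Finset.univ

lemma bracket_bddAbove {v w : Fin n → ℝ≥0} (hw : w ≠ 0) :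
    BddAbove {l : ℝ≥0 | l • w ≤ v} := by
  obtain ⟨i, hi⟩ : ∃ i, w i ≠ 0 := by
    by_contra h
    push_neg at h
    exact hw (funext h)
  refine ⟨v i / w i, fun l hl => ?_⟩
  rw [le_div_iff₀ (zero_lt_iff.mpr hi)]
  exact hl i

lemma le_bracket {v w : Fin n → ℝ≥0} (hw : w ≠ 0) {l : ℝ≥0} (h : l • w ≤ v) :
    l ≤ bracket v w :=
  le_csSup (bracket_bddAbove hw) h

lemma bracket_smul_le {v w : Fin n → ℝ≥0} (hw : w ≠ 0) : bracket v w • w ≤ v := by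
  intro j
  rw [Pi.smul_apply, smul_eq_mul]
  rcases eq_or_ne (w j) 0 with h0 | h0
  · simp [h0]
  · rw [← le_div_iff₀ (zero_lt_iff.mpr h0)]
    apply csSup_le ⟨0, by simp⟩
    intro l hl
    rw [le_div_iff₀ (zero_lt_iff.mpr h0)]
    exact hl j

end Aux

theorem stmt10 {n : ℕ} (A : Matrix (Fin n) (Fin n) ℝ≥0) (W : Set (Fin n → ℝ≥0))
    (hW : MaxCone W) (hcl : IsClosed W) (hnz : ∃ w ∈ W, w ≠ 0)
    (hinv : ∀ v ∈ W, maxMul A v ∈ W)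
    (hmin : ∀ W' : Set (Fin n → ℝ≥0), MaxCone W' → IsClosed W' →
      (∃ w ∈ W', w ≠ 0) → (∀ v ∈ W', maxMul A v ∈ W') → W' ⊆ W → W' = W)
    (hpow : ∀ v ∈ W, v ≠ 0 → ∀ t : ℕ, 1 ≤ t → maxMul (maxPow A t) v ≠ 0) :
    ∀ t : ℕ, 1 ≤ t → ∀ v ∈ W, v ≠ 0 →
      bracket v (maxMul (maxPow A t) v) = bracket v (maxMul A v) ^ t := by
  intro t ht v hv hv0
  set f := maxMul A with hf
  have iter_smul : ∀ (s : ℕ) (c : ℝ≥0) (x : Fin n → ℝ≥0), f^[s] (c • x) = c • f^[s] x := by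
    intro s
    induction s with
    | zero => simp
    | succ s ih =>
      intro c x
      rw [Function.iterate_succ_apply, hf, maxMul_smul, ← hf, ih,
        ← Function.iterate_succ_apply]
  have iter_mono : ∀ (s : ℕ) {x y : Fin n → ℝ≥0}, x ≤ y → f^[s] x ≤ f^[s] y := by
    intro s
    induction s with
    | zero => intro x y h; simpa using h
    | succ s ih =>
      intro x y h
      rw [Function.iterate_succ_apply, Function.iterate_succ_apply]
      exact ih (maxMul_mono A h)
  have iter_mem : ∀ (s : ℕ), f^[s] v ∈ W := by
    intro s
    induction s with
    | zero => simpa using hv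
    | succ s ih =>
      rw [Function.iterate_succ_apply']
      exact hinv _ ih
  have hfv_ne : ∀ s : ℕ, 1 ≤ s → f^[s] v ≠ 0 := by
    intro s hs
    have := hpow v hv hv0 s hs
    rwa [maxMul_maxPow] at this
  have hfv1 : maxMul A v = f^[1] v := by simp [hf]
  rw [maxMul_maxPow]
  set β := bracket v (maxMul A v) with hβ
  have hβle : β • f v ≤ v := by
    have h1 : maxMul A v ≠ 0 := by rw [hfv1]; exact hfv_ne 1 le_rfl
    have := bracket_smul_le (v := v) h1
    rwa [← hβ, ← hf] at this
  have easy : ∀ s : ℕ, β ^ s • f^[s] v ≤ v := by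
    intro s
    induction s with
    | zero => simp
    | succ s ih =>
      rw [Function.iterate_succ_apply]
      calc β ^ (s+1) • f^[s] (f v) = β ^ s • f^[s] (β • f v) := by
            rw [iter_smul, smul_smul, ← pow_succ]
      _ ≤ β ^ s • f^[s] v := smul_le_smul_vec _ (iter_mono s hβle)
      _ ≤ v := ih
  apply le_antisymm
  · -- hard direction
    set lam := bracket v (f^[t] v) with hlam
    have hmem : lam • f^[t] v ≤ v := bracket_smul_le (hfv_ne t ht)
    set r : ℝ≥0 := lam ^ ((t : ℝ)⁻¹) with hr
    have ht0 : (t : ℝ) ≠ 0 := by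
      exact Nat.cast_ne_zero.mpr (by omega)
    have hrt : r ^ t = lam := by
      rw [hr, ← NNReal.rpow_natCast (lam ^ ((t : ℝ)⁻¹)) t, ← NNReal.rpow_mul,
        inv_mul_cancel₀ ht0, NNReal.rpow_one]
    set w : Fin n → ℝ≥0 := (Finset.range t).sup (fun s => r ^ s • f^[s] v) with hwdef
    have hvw : v ≤ w := by
      have := Finset.le_sup (f := fun s => r ^ s • f^[s] v)
        (Finset.mem_range.mpr ht)
      simpa using this
    have hwW : w ∈ W := by
      apply Finset.sup_induction hW.1 (fun a ha b hb => hW.2.1 a ha b hb)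
      intro s _
      exact hW.2.2 _ _ (iter_mem s)
    have hw0 : w ≠ 0 := by
      intro h
      exact hv0 (le_antisymm (h ▸ hvw) zero_le)
    have hrw : r • f w ≤ w := by
      rw [hwdef, hf, maxMul_finsetSup, smul_finsetSup]
      apply Finset.sup_le
      intro s hs
      have hterm : r • maxMul A (r ^ s • f^[s] v) = r ^ (s+1) • f^[s+1] v := by
        rw [maxMul_smul, smul_smul, ← pow_succ', ← hf, Function.iterate_succ_apply']
      rw [hterm]
      rcases eq_or_lt_of_le (Nat.succ_le_of_lt (Finset.mem_range.mp hs)) with heq | hlt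
      · rw [show s + 1 = t from heq, hrt]
        exact le_trans hmem hvw
      · exact Finset.le_sup (f := fun s => r ^ s • f^[s] v) (Finset.mem_range.mpr hlt)
    set W' : Set (Fin n → ℝ≥0) := {x ∈ W | r • maxMul A x ≤ x} with hW'def
    have hW'cone : MaxCone W' := by
      refine ⟨⟨hW.1, by rw [maxMul_zero]; simp⟩, ?_, ?_⟩
      · intro x hx y hy
        refine ⟨hW.2.1 x hx.1 y hy.1, ?_⟩
        rw [maxMul_supv, smul_supv]
        exact sup_le_sup hx.2 hy.2
      · intro c x hx
        refine ⟨hW.2.2 c x hx.1, ?_⟩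
        rw [maxMul_smul, smul_comm]
        exact smul_le_smul_vec c hx.2
    have hW'cl : IsClosed W' := by
      have : W' = W ∩ ⋂ i : Fin n, {x : Fin n → ℝ≥0 | (r • maxMul A x) i ≤ x i} := by
        ext x
        simp only [hW'def, Set.mem_setOf_eq, Set.mem_inter_iff, Set.mem_iInter]
        exact ⟨fun h => ⟨h.1, fun i => h.2 i⟩, fun h => ⟨h.1, fun i => h.2 i⟩⟩
      rw [this]
      refine hcl.inter (isClosed_iInter fun i => isClosed_le ?_ (continuous_apply i))
      exact (continuous_const.mul (maxMul_continuous_apply A i))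
    have hW'nz : ∃ x ∈ W', x ≠ 0 := ⟨w, ⟨hwW, by rw [← hf]; exact hrw⟩, hw0⟩
    have hW'inv : ∀ x ∈ W', maxMul A x ∈ W' := by
      intro x hx
      refine ⟨hinv x hx.1, ?_⟩
      rw [← maxMul_smul]
      exact maxMul_mono A hx.2
    have hW'sub : W' ⊆ W := fun x hx => hx.1
    have hWeq : W' = W := hmin W' hW'cone hW'cl hW'nz hW'inv hW'sub
    have hvW' : v ∈ W' := hWeq ▸ hv
    have hrβ : r ≤ β := by
      apply le_bracket
      · rw [hfv1]; exact hfv_ne 1 le_rfl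
      · exact hvW'.2
    calc lam = r ^ t := hrt.symm
    _ ≤ β ^ t := pow_le_pow_left₀ zero_le hrβ t
  · exact le_bracket (hfv_ne t ht) (easy t)
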